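/- Suppose bρ̄ > ū² and n₁ := 2√(bρ̄ − ū²)/μ₀ is a positive integer. Then ν_{n₁}^p = ν_{−n₁}^p, and for every other pair of distinct nonzero integers n ≠ l (i.e. with (n,l) ∉ {(n₁,−n₁), (−n₁,n₁)}) one has ν_n^p ≠ ν_l^p. In particular, if bρ̄ ≤ ū² or 2√(bρ̄ − ū²)/μ₀ is not an integer, then the map n ↦ ν_n^p is injective on the nonzero integers. -/

import Mathlib

open scoped Classical
open Complex

/-- The parabolic branch of eigenvalues of the adjoint operator of the linearized
barotropic compressible Navier–Stokes system. -/
noncomputable def nuP (ρ u b μ : ℝ) (n : ℤ) : ℂ :=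
  if 4 * b * ρ ≤ μ ^ 2 * (n : ℝ) ^ 2 then
    (((-(μ * (n : ℝ) ^ 2) - |(n : ℝ)| * Real.sqrt (μ ^ 2 * (n : ℝ) ^ 2 - 4 * b * ρ)) / 2 : ℝ) : ℂ)
      + Complex.I * ((u * (n : ℝ) : ℝ) : ℂ)
  else
    ((-(μ * (n : ℝ) ^ 2) / 2 : ℝ) : ℂ)
      + Complex.I * ((u * (n : ℝ) - (n : ℝ) / 2 * Real.sqrt (4 * b * ρ - μ ^ 2 * (n : ℝ) ^ 2) : ℝ) : ℂ)

lemma nuP_eq_iff (ρ u b μ : ℝ) (hu : 0 < u) (hμ : 0 < μ)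
    (n l : ℤ) (hne : n ≠ l) :
    nuP ρ u b μ n = nuP ρ u b μ l ↔
      (l = -n ∧ μ ^ 2 * (n : ℝ) ^ 2 = 4 * (b * ρ - u ^ 2)) := by
  have hNL : (n : ℝ) ≠ (l : ℝ) := fun h => hne (by exact_mod_cast h)
  constructor
  · intro h
    by_cases h1 : 4 * b * ρ ≤ μ ^ 2 * (n : ℝ) ^ 2 <;>
      by_cases h2 : 4 * b * ρ ≤ μ ^ 2 * (l : ℝ) ^ 2
    · rw [nuP, nuP, if_pos h1, if_pos h2, Complex.ext_iff] at h
      set N := ((n : ℝ)); set L := ((l : ℝ))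
      simp [← Complex.ofReal_pow] at h
      rcases h.2 with h' | h'
      · exact absurd h' hNL
      · exact absurd h' hu.ne'
    · exfalso
      rw [nuP, nuP, if_pos h1, if_neg h2, Complex.ext_iff] at h
      set N := ((n : ℝ)); set L := ((l : ℝ))
      simp [← Complex.ofReal_pow] at h
      have hs : 0 ≤ |N| * Real.sqrt (μ ^ 2 * N ^ 2 - 4 * b * ρ) :=
        mul_nonneg (abs_nonneg _) (Real.sqrt_nonneg _)
      have hlt : μ ^ 2 * L ^ 2 < μ ^ 2 * N ^ 2 := lt_of_lt_of_le (lt_of_not_ge h2) h1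
      nlinarith [h.1, hμ, hs, hlt]
    · exfalso
      rw [nuP, nuP, if_neg h1, if_pos h2, Complex.ext_iff] at h
      set N := ((n : ℝ)); set L := ((l : ℝ))
      simp [← Complex.ofReal_pow] at h
      have hs : 0 ≤ |L| * Real.sqrt (μ ^ 2 * L ^ 2 - 4 * b * ρ) :=
        mul_nonneg (abs_nonneg _) (Real.sqrt_nonneg _)
      have hlt : μ ^ 2 * N ^ 2 < μ ^ 2 * L ^ 2 := lt_of_lt_of_le (lt_of_not_ge h1) h2
      nlinarith [h.1, hμ, hs, hlt]
    · rw [nuP, nuP, if_neg h1, if_neg h2, Complex.ext_iff] at h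
      set N := ((n : ℝ)) with hNdef; set L := ((l : ℝ)) with hLdef
      simp [← Complex.ofReal_pow] at h
      have hN2 : N ^ 2 = L ^ 2 := h.1.resolve_right hμ.ne'
      have hLneg : L = -N := by
        have hfac : (N - L) * (N + L) = 0 := by nlinarith [hN2]
        rcases mul_eq_zero.mp hfac with h' | h'
        · exact absurd (by linarith : N = L) hNL
        · linarith
      have hNne : N ≠ 0 := by
        intro h0
        apply hNL
        rw [h0, hLneg, h0, neg_zero]
      have him := h.2
      rw [hLneg, neg_sq] at him
      set s := Real.sqrt (4 * b * ρ - μ ^ 2 * N ^ 2) with hsdef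
      have hseq : s = 2 * u := by
        have : N * s = N * (2 * u) := by ring_nf; ring_nf at him; linarith
        exact mul_left_cancel₀ hNne this
      have hsq : s ^ 2 = 4 * b * ρ - μ ^ 2 * N ^ 2 :=
        Real.sq_sqrt (by linarith [lt_of_not_ge h1])
      refine ⟨?_, by nlinarith [hseq, hsq]⟩
      have : L = -N := hLneg
      rw [hNdef, hLdef] at this
      exact_mod_cast this
  · rintro ⟨rfl, heq⟩
    have harg : 4 * b * ρ - μ ^ 2 * (n : ℝ) ^ 2 = 4 * u ^ 2 := by linarith
    have h1 : ¬ 4 * b * ρ ≤ μ ^ 2 * (n : ℝ) ^ 2 := by nlinarith [hu, sq_nonneg u]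
    have hcast : ((-n : ℤ) : ℝ) = -(n : ℝ) := by push_cast; ring
    have h2 : ¬ 4 * b * ρ ≤ μ ^ 2 * ((-n : ℤ) : ℝ) ^ 2 := by
      rw [hcast]; simpa using h1
    rw [nuP, nuP, if_neg h1, if_neg h2, hcast]
    have hs : Real.sqrt (4 * b * ρ - μ ^ 2 * (n : ℝ) ^ 2) = 2 * u := by
      rw [harg, show (4 : ℝ) * u ^ 2 = (2 * u) ^ 2 by ring, Real.sqrt_sq (by linarith)]
    have hs2 : Real.sqrt (4 * b * ρ - μ ^ 2 * (-(n : ℝ)) ^ 2) = 2 * u := by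
      rw [show (-(n:ℝ)) ^ 2 = (n:ℝ) ^ 2 by ring, hs]
    rw [hs, hs2, Complex.ext_iff]
    constructor <;> simp [← Complex.ofReal_pow] <;> ring

/-- If `bρ̄ > ū²` and `n₁ = 2√(bρ̄ − ū²)/μ₀` is a positive integer, then
`ν_{n₁}^p = ν_{−n₁}^p` and all other pairs of distinct nonzero indices give distinct
parabolic eigenvalues.  In particular, if `bρ̄ ≤ ū²` or `2√(bρ̄ − ū²)/μ₀` is not an
integer, then `n ↦ ν_n^p` is injective on the nonzero integers. -/
theorem parabolic_eigenvalues_multiplicity (ρ u b μ : ℝ) (hρ : 0 < ρ) (hu : 0 < u)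
    (hb : 0 < b) (hμ : 0 < μ) :
    (∀ n₁ : ℤ, 0 < n₁ → u ^ 2 < b * ρ → (n₁ : ℝ) = 2 * Real.sqrt (b * ρ - u ^ 2) / μ →
      nuP ρ u b μ n₁ = nuP ρ u b μ (-n₁) ∧
      (∀ n l : ℤ, n ≠ 0 → l ≠ 0 → n ≠ l → ¬(n = n₁ ∧ l = -n₁) → ¬(n = -n₁ ∧ l = n₁) →
        nuP ρ u b μ n ≠ nuP ρ u b μ l)) ∧
    ((b * ρ ≤ u ^ 2 ∨ ∀ m : ℤ, (m : ℝ) ≠ 2 * Real.sqrt (b * ρ - u ^ 2) / μ) →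
      ∀ n l : ℤ, n ≠ 0 → l ≠ 0 → nuP ρ u b μ n = nuP ρ u b μ l → n = l) := by
  have key := nuP_eq_iff ρ u b μ hu hμ
  constructor
  · intro n₁ hpos hlt hval
    have hn1 : (0 : ℝ) < (n₁ : ℝ) := by exact_mod_cast hpos
    rw [eq_div_iff hμ.ne'] at hval
    have hroot : Real.sqrt (b * ρ - u ^ 2) ^ 2 = b * ρ - u ^ 2 :=
      Real.sq_sqrt (by linarith)
    have hE1 : μ ^ 2 * (n₁ : ℝ) ^ 2 = 4 * (b * ρ - u ^ 2) := by
      rw [show μ ^ 2 * (n₁ : ℝ) ^ 2 = ((n₁ : ℝ) * μ) ^ 2 by ring, hval, mul_pow, hroot]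
      ring
    have hne1 : n₁ ≠ -n₁ := by omega
    refine ⟨(key n₁ (-n₁) hne1).mpr ⟨rfl, hE1⟩, ?_⟩
    intro n l hn hl hne hx1 hx2 heq
    obtain ⟨rfl, hE⟩ := (key n l hne).mp heq
    have hsq : μ ^ 2 * (n : ℝ) ^ 2 = μ ^ 2 * (n₁ : ℝ) ^ 2 := by rw [hE, hE1]
    have hsq2 : (n : ℝ) ^ 2 = (n₁ : ℝ) ^ 2 :=
      mul_left_cancel₀ (pow_ne_zero 2 hμ.ne') hsq
    have hfac : ((n : ℝ) - n₁) * ((n : ℝ) + n₁) = 0 := by nlinarith [hsq2]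
    rcases mul_eq_zero.mp hfac with h' | h'
    · have : (n : ℝ) = (n₁ : ℝ) := by linarith
      have hnn : n = n₁ := by exact_mod_cast this
      exact hx1 ⟨hnn, by rw [hnn]⟩
    · have : (n : ℝ) = -(n₁ : ℝ) := by linarith
      have hnn : n = -n₁ := by exact_mod_cast this
      exact hx2 ⟨hnn, by rw [hnn, neg_neg]⟩
  · intro hcond n l hn hl heq
    by_contra hne
    obtain ⟨rfl, hE⟩ := (key n l hne).mp heq
    have hNne : ((n : ℝ)) ≠ 0 := by exact_mod_cast hn
    have hpos : 0 < μ ^ 2 * (n : ℝ) ^ 2 := by positivity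
    rcases hcond with hc | hc
    · nlinarith [hE, hpos]
    · apply hc |n|
      have hb2 : (0:ℝ) ≤ b * ρ - u ^ 2 := by nlinarith [hE, hpos]
      have : Real.sqrt (b * ρ - u ^ 2) = μ * |(n : ℝ)| / 2 := by
        have h4 : (μ * |(n : ℝ)| / 2) ^ 2 = b * ρ - u ^ 2 := by
          rw [div_pow, mul_pow, _root_.sq_abs]
          norm_num
          linarith [hE]
        rw [← h4]
        exact Real.sqrt_sq (by positivity)
      rw [this, Int.cast_abs]
      field_simp
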